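/- For c > 1 and x ≥ 0, 0F1(-;c;x) ≤ e^{√(4x+(c+1)²) − c − 1} · ((c−1)/(2c) + (1/(2c))√(4x+(c+1)²))^{1−c}. -/

import Mathlib

open Finset Real MeasureTheory

noncomputable def rise (a : ℝ) (n : ℕ) : ℝ := ∏ k ∈ Finset.range n, (a + k)

namespace Stmt10Aux

lemma rise_zero (a : ℝ) : rise a 0 = 1 := by simp [rise]

lemma rise_succ (a : ℝ) (n : ℕ) : rise a (n+1) = rise a n * (a + n) := by
  simp [rise, Finset.prod_range_succ]

variable {c : ℝ} (hc : 1 < c)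

include hc in
lemma one_le_rise (n : ℕ) : 1 ≤ rise c n := by
  induction n with
  | zero => simp [rise_zero]
  | succ n ih =>
    rw [rise_succ]
    nlinarith [Nat.cast_nonneg (α := ℝ) n]

include hc in
lemma rise_pos (n : ℕ) : 0 < rise c n := lt_of_lt_of_le one_pos (one_le_rise hc n)

/-- coefficients of 0F1 -/
noncomputable def aa (c : ℝ) (n : ℕ) : ℝ := 1 / (rise c n * n.factorial)
/-- coefficients of derivative -/
noncomputable def bb (c : ℝ) (n : ℕ) : ℝ := 1 / (rise c (n+1) * n.factorial)
/-- 1/(c)_{k+1} -/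
noncomputable def bt (c : ℝ) (n : ℕ) : ℝ := 1 / rise c (n+1)

include hc

lemma aa_pos (n : ℕ) : 0 < aa c n := by
  have := rise_pos hc n
  have : (0:ℝ) < n.factorial := by positivity
  unfold aa
  positivity

lemma bb_pos (n : ℕ) : 0 < bb c n := by
  have := rise_pos hc (n+1)
  have : (0:ℝ) < n.factorial := by positivity
  unfold bb
  positivity

lemma bt_pos (n : ℕ) : 0 < bt c n := by
  have := rise_pos hc (n+1)
  unfold bt; positivity

lemma aa_le (n : ℕ) : aa c n ≤ 1 / n.factorial := by
  unfold aa
  have h1 := one_le_rise hc n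
  have h2 : (0:ℝ) < n.factorial := by positivity
  rw [div_le_div_iff₀ (by nlinarith) h2]
  nlinarith

lemma bb_le (n : ℕ) : bb c n ≤ 1 / n.factorial := by
  unfold bb
  have h1 := one_le_rise hc (n+1)
  have h2 : (0:ℝ) < n.factorial := by positivity
  rw [div_le_div_iff₀ (by nlinarith) h2]
  nlinarith

lemma aa_eq (n : ℕ) : aa c n = (c + n) * bb c n := by
  unfold aa bb
  rw [rise_succ]
  have h1 := rise_pos hc n
  have h2 : (0:ℝ) < n.factorial := by positivity
  have h3 : (0:ℝ) < c + n := by have := Nat.cast_nonneg (α := ℝ) n; linarith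
  field_simp

lemma bb_eq_succ_aa (n : ℕ) : bb c n = ((n:ℝ)+1) * aa c (n+1) := by
  unfold aa bb
  rw [Nat.factorial_succ]
  have h1 := rise_pos hc (n+1)
  have h2 : (0:ℝ) < n.factorial := by positivity
  have h3 : (0:ℝ) < (n:ℝ)+1 := by positivity
  push_cast
  field_simp

omit hc in
lemma bb_eq_bt (n : ℕ) : bb c n = bt c n * (1 / n.factorial) := by
  unfold bb bt
  rw [one_div_mul_one_div]

lemma bt_succ (n : ℕ) : bt c (n+1) = bt c n / (c + (n+1)) := by
  unfold bt
  rw [rise_succ]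
  have h1 := rise_pos hc (n+1)
  have h3 : (0:ℝ) < c + ((n:ℕ)+1) := by have := Nat.cast_nonneg (α := ℝ) n; push_cast; linarith
  rw [div_div]
  push_cast
  ring_nf

omit hc in section



lemma sumkC (n : ℕ) : 2 * ∑ k ∈ range (n+1), k * n.choose k = n * 2^n := by
  induction n with
  | zero => simp
  | succ m _ =>
    have h : ∑ k ∈ range (m+2), k * (m+1).choose k
        = ∑ k ∈ range (m+1), (k+1) * (m+1).choose (k+1) := by
      rw [Finset.sum_range_succ' (fun k => k * (m+1).choose k) (m+1)]
      simp
    have h2 : ∀ k, (k+1) * (m+1).choose (k+1) = (m+1) * m.choose k := by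
      intro k
      rw [mul_comm, ← Nat.add_one_mul_choose_eq, mul_comm]
    rw [h]
    simp_rw [h2]
    rw [← Finset.mul_sum, Nat.sum_range_choose]
    ring

lemma sumkkC (n : ℕ) : 4 * ∑ k ∈ range (n+1), k * (k-1) * n.choose k = n * (n-1) * 2^n := by
  match n with
  | 0 => simp
  | 1 => decide
  | (m+2) =>
    have h : ∑ k ∈ range (m+3), k * (k-1) * (m+2).choose k
        = ∑ k ∈ range (m+2), (k+1) * k * (m+2).choose (k+1) := by
      rw [Finset.sum_range_succ' (fun k => k * (k-1) * (m+2).choose k) (m+2)]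
      simp
    have h2 : ∀ k, (k+1) * k * (m+2).choose (k+1) = (m+2) * (k * (m+1).choose k) := by
      intro k
      have := Nat.add_one_mul_choose_eq (m+1) k
      calc (k+1) * k * (m+2).choose (k+1) = ((m+2).choose (k+1) * (k+1)) * k := by ring
        _ = ((m+2) * (m+1).choose k) * k := by rw [← this]
        _ = (m+2) * (k * (m+1).choose k) := by ring
    rw [h]
    simp_rw [h2]
    rw [← Finset.mul_sum]
    have h3 := sumkC (m+1)
    calc 4 * ((m+2) * ∑ k ∈ range (m+2), k * (m+1).choose k)
        = 2 * (m+2) * (2 * ∑ k ∈ range (m+2), k * (m+1).choose k) := by ring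
      _ = 2 * (m+2) * ((m+1) * 2^(m+1)) := by rw [h3]
      _ = (m+2) * (m+2-1) * 2^(m+2) := by simp [Nat.add_sub_cancel]; ring

lemma castkk (k : ℕ) : ((k * (k-1) : ℕ) : ℝ) = (k:ℝ) * ((k:ℝ) - 1) := by
  match k with
  | 0 => simp
  | (j+1) => push_cast [Nat.add_sub_cancel]; ring

lemma sumZero (n : ℕ) :
    ∑ k ∈ range (n+1), (n.choose k : ℝ) * ((n:ℝ) - ((n:ℝ) - 2*k)^2) = 0 := by
  have hA : ∑ k ∈ range (n+1), (n.choose k : ℝ) = 2^n := by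
    rw [← Nat.cast_sum]
    norm_cast
    exact Nat.sum_range_choose n
  have hB : 2 * ∑ k ∈ range (n+1), (k:ℝ) * (n.choose k : ℝ) = n * 2^n := by
    have := sumkC n
    have : ((2 * ∑ k ∈ range (n+1), k * n.choose k : ℕ) : ℝ) = ((n * 2^n : ℕ) : ℝ) := by
      rw [this]
    push_cast at this
    rw [← this, Finset.mul_sum]
  have hD : 4 * ∑ k ∈ range (n+1), (k:ℝ) * ((k:ℝ)-1) * (n.choose k : ℝ)
      = (n:ℝ) * ((n:ℝ)-1) * 2^n := by
    have h1 := sumkkC n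
    have h2 : ((4 * ∑ k ∈ range (n+1), k * (k-1) * n.choose k : ℕ) : ℝ)
        = ((n * (n-1) * 2^n : ℕ) : ℝ) := by rw [h1]
    have h3 : ∑ k ∈ range (n+1), (k:ℝ) * ((k:ℝ)-1) * (n.choose k : ℝ)
        = ((∑ k ∈ range (n+1), k * (k-1) * n.choose k : ℕ) : ℝ) := by
      rw [Nat.cast_sum]
      apply Finset.sum_congr rfl
      intro k _
      rw [Nat.cast_mul, castkk k]
    rw [h3, ← Nat.cast_ofNat (n := 4), ← Nat.cast_mul, h1]
    rw [Nat.cast_mul, castkk n]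
    push_cast
    ring
  have expand : ∑ k ∈ range (n+1), (n.choose k : ℝ) * ((n:ℝ) - ((n:ℝ) - 2*k)^2)
      = ((n:ℝ) - (n:ℝ)^2) * (∑ k ∈ range (n+1), (n.choose k : ℝ))
        + (4*(n:ℝ) - 4) * (∑ k ∈ range (n+1), (k:ℝ) * (n.choose k : ℝ))
        - 4 * (∑ k ∈ range (n+1), (k:ℝ) * ((k:ℝ)-1) * (n.choose k : ℝ)) := by
    rw [Finset.mul_sum, Finset.mul_sum, Finset.mul_sum, ← Finset.sum_add_distrib,
      ← Finset.sum_sub_distrib]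
    apply Finset.sum_congr rfl
    intro k _
    ring
  rw [expand, hA]
  linear_combination (2*(n:ℝ)-2) * hB - hD



end

/-- symmetric product -/
noncomputable def qq (c : ℝ) (n k : ℕ) : ℝ := bt c k * bt c (n - k)
/-- weight -/
noncomputable def ww (n k : ℕ) : ℝ := (n:ℝ) - ((n:ℝ) - 2*k)^2

include hc

lemma qq_step (n i : ℕ) (h : 2*i < n) : qq c n i ≤ qq c n (i+1) := by
  obtain ⟨m, hm⟩ : ∃ m, n - i = m + 1 := ⟨n - i - 1, by omega⟩
  have h2 : n - (i+1) = m := by omega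
  have him : (i:ℝ) ≤ (m:ℝ) := by exact_mod_cast (by omega : i ≤ m)
  unfold qq
  rw [hm, h2, bt_succ hc, bt_succ hc]
  have hbi := bt_pos hc i
  have hbm := bt_pos hc m
  have e1 : bt c i * (bt c m / (c + ((m:ℝ)+1))) = (bt c i * bt c m) / (c + ((m:ℝ)+1)) := by ring
  have e2 : bt c i / (c + ((i:ℝ)+1)) * bt c m = (bt c i * bt c m) / (c + ((i:ℝ)+1)) := by ring
  rw [e1, e2]
  gcongr <;> first | positivity | linarith

lemma qq_mono (n : ℕ) : ∀ j, 2*j ≤ n → ∀ i, i ≤ j → qq c n i ≤ qq c n j := by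
  intro j
  induction j with
  | zero =>
    intro _ i hi
    have : i = 0 := by omega
    subst this
    exact le_rfl
  | succ j ih =>
    intro hj i hi
    rcases Nat.eq_or_lt_of_le hi with rfl | hlt
    · exact le_refl _
    · have hi' : i ≤ j := by omega
      have h1 : qq c n i ≤ qq c n j := ih (by omega) i hi'
      have h2 : qq c n j ≤ qq c n (j+1) := qq_step hc n j (by omega)
      linarith

omit hc in
lemma qq_symm (n i : ℕ) (h : i ≤ n) : qq c n (n - i) = qq c n i := by
  unfold qq
  rw [Nat.sub_sub_self h, mul_comm]

omit hc in
lemma qq_half (n i : ℕ) (h : i ≤ n) : ∃ i', i' ≤ n ∧ 2*i' ≤ n ∧ qq c n i' = qq c n i ∧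
    ((n:ℝ) - 2*i')^2 = ((n:ℝ) - 2*i)^2 := by
  rcases le_or_gt (2*i) n with h2 | h2
  · exact ⟨i, h, h2, rfl, rfl⟩
  · refine ⟨n - i, by omega, by omega, qq_symm n i h, ?_⟩
    have hcast : ((n - i : ℕ):ℝ) = (n:ℝ) - (i:ℝ) := Nat.cast_sub h
    rw [hcast]
    ring

lemma Qmono (n i j : ℕ) (hi : i ≤ n) (hj : j ≤ n)
    (h : ((n:ℝ) - 2*j)^2 ≤ ((n:ℝ) - 2*i)^2) : qq c n i ≤ qq c n j := by
  obtain ⟨i', hi'n, hi'2, hi'q, hi's⟩ := qq_half n i hi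
  obtain ⟨j', hj'n, hj'2, hj'q, hj's⟩ := qq_half n j hj
  rw [← hi'q, ← hj'q]
  have hci : (0:ℝ) ≤ (n:ℝ) - 2*i' := by
    have : ((2*i' : ℕ):ℝ) ≤ ((n:ℕ):ℝ) := by exact_mod_cast hi'2
    push_cast at this; linarith
  have hcj : (0:ℝ) ≤ (n:ℝ) - 2*j' := by
    have : ((2*j' : ℕ):ℝ) ≤ ((n:ℕ):ℝ) := by exact_mod_cast hj'2
    push_cast at this; linarith
  have h' : ((n:ℝ) - 2*j')^2 ≤ ((n:ℝ) - 2*i')^2 := by rw [hi's, hj's]; exact h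
  have hle : (n:ℝ) - 2*j' ≤ (n:ℝ) - 2*i' := by nlinarith
  have : (i':ℝ) ≤ (j':ℝ) := by linarith
  exact qq_mono hc n j' hj'2 i' (by exact_mod_cast this)

lemma U_nonneg (n : ℕ) :
    0 ≤ ∑ k ∈ range (n+1), (n.choose k : ℝ) * (qq c n k * ww n k) := by
  set s := (range n).powerset with hs
  have hcard : ∀ S ∈ s, S.card ≤ n := by
    intro S hS
    have := Finset.card_le_card (Finset.mem_powerset.1 hS)
    simpa using this
  have hmono : MonovaryOn (fun S : Finset ℕ => ww n S.card)
      (fun S : Finset ℕ => qq c n S.card) s := by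
    intro S hS T hT hlt
    by_contra hgt
    push_neg at hgt
    have hsq : ((n:ℝ) - 2*S.card)^2 ≤ ((n:ℝ) - 2*T.card)^2 := by
      unfold ww at hgt; linarith
    exact absurd (Qmono hc n T.card S.card (hcard T hT) (hcard S hS) hsq) (not_le.2 hlt)
  have cheb := hmono.sum_mul_sum_le_card_mul_sum
  have hgroup : ∀ f : ℕ → ℝ, ∑ S ∈ s, f S.card
      = ∑ k ∈ range (n+1), (n.choose k : ℝ) * f k := by
    intro f
    rw [hs, Finset.sum_powerset_apply_card f, Finset.card_range]
    apply Finset.sum_congr rfl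
    intro k _
    rw [nsmul_eq_mul]
  have hsum0 : ∑ S ∈ s, ww n S.card = 0 := by
    rw [hgroup (ww n)]
    unfold ww
    exact sumZero n
  rw [hsum0, zero_mul] at cheb
  have h2 : ∑ S ∈ s, ww n S.card * qq c n S.card
      = ∑ k ∈ range (n+1), (n.choose k : ℝ) * (qq c n k * ww n k) := by
    rw [hgroup (fun k => ww n k * qq c n k)]
    apply Finset.sum_congr rfl
    intro k _
    ring
  rw [h2] at cheb
  by_contra hneg
  push_neg at hneg
  have hcpos : (0:ℝ) < (s.card : ℝ) := by
    have : s.Nonempty := ⟨∅, Finset.empty_mem_powerset _⟩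
    exact_mod_cast Finset.card_pos.2 this
  nlinarith

lemma T_nonneg (n : ℕ) :
    0 ≤ ∑ k ∈ range (n+1), bb c k * bb c (n-k) * ww n k := by
  have hterm : ∀ k ∈ range (n+1), bb c k * bb c (n-k) * ww n k
      = ((n.choose k : ℝ) * (qq c n k * ww n k)) / n.factorial := by
    intro k hk
    have hkn : k ≤ n := by
      have := Finset.mem_range.1 hk; omega
    have hcf : ((n.choose k * k.factorial * (n-k).factorial : ℕ) : ℝ) = (n.factorial : ℝ) := by
      exact_mod_cast congrArg Nat.cast (Nat.choose_mul_factorial_mul_factorial hkn)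
    push_cast at hcf
    have hf1 : (0:ℝ) < k.factorial := by positivity
    have hf2 : (0:ℝ) < (n-k).factorial := by positivity
    have hf3 : (0:ℝ) < n.factorial := by positivity
    rw [bb_eq_bt, bb_eq_bt, eq_div_iff (ne_of_gt hf3)]
    unfold qq
    rw [← hcf]
    field_simp
  rw [Finset.sum_congr rfl hterm, ← Finset.sum_div]
  have hf3 : (0:ℝ) ≤ n.factorial := by positivity
  exact div_nonneg (U_nonneg hc n) hf3

lemma keyP (n : ℕ) :
    (∑ k ∈ range (n+1), (k:ℝ) * aa c k * bb c (n-k))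
      + (c-1) * (∑ k ∈ range (n+1), aa c k * bb c (n-k))
      + c * (∑ k ∈ range (n+1), bb c k * bb c (n-k))
      ≤ ∑ k ∈ range (n+1), aa c k * aa c (n-k) := by
  rw [← sub_nonneg]
  set f : ℕ → ℝ := fun k => aa c k * aa c (n-k) - ((c-1) + k) * (aa c k * bb c (n-k))
      - c * (bb c k * bb c (n-k)) with hf
  have hsplit : (∑ k ∈ range (n+1), aa c k * aa c (n-k))
      - ((∑ k ∈ range (n+1), (k:ℝ) * aa c k * bb c (n-k))
        + (c-1) * (∑ k ∈ range (n+1), aa c k * bb c (n-k))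
        + c * (∑ k ∈ range (n+1), bb c k * bb c (n-k)))
      = ∑ k ∈ range (n+1), f k := by
    rw [Finset.mul_sum, Finset.mul_sum, ← Finset.sum_add_distrib, ← Finset.sum_add_distrib,
      ← Finset.sum_sub_distrib]
    apply Finset.sum_congr rfl
    intro k _
    rw [hf]
    ring
  rw [hsplit]
  have hrefl : ∑ k ∈ range (n+1), f (n - k) = ∑ k ∈ range (n+1), f k := by
    have := Finset.sum_range_reflect f (n+1)
    simpa using this
  have hpair : ∀ k ∈ range (n+1), f k + f (n-k) = bb c k * bb c (n-k) * ww n k := by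
    intro k hk
    have hkn : k ≤ n := by have := Finset.mem_range.1 hk; omega
    set l := n - k with hl
    have hnl : n - l = k := by omega
    have hcl : (l:ℝ) = (n:ℝ) - (k:ℝ) := Nat.cast_sub hkn
    have hn : (n:ℝ) = (k:ℝ) + (l:ℝ) := by rw [hcl]; ring
    rw [hf]
    simp only [hnl]
    rw [aa_eq hc k, aa_eq hc l]
    unfold ww
    rw [hn]
    ring
  have h2 : 2 * ∑ k ∈ range (n+1), f k
      = ∑ k ∈ range (n+1), bb c k * bb c (n-k) * ww n k := by
    rw [← Finset.sum_congr rfl hpair, Finset.sum_add_distrib, hrefl]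
    ring
  have := T_nonneg hc n
  linarith [h2 ▸ this]


/-! ### Series infrastructure -/

/-- the 0F1 function -/
noncomputable def Fg (c : ℝ) : ℝ → ℝ := fun y => ∑' n, aa c n * y^n
/-- its derivative -/
noncomputable def Gg (c : ℝ) : ℝ → ℝ := fun y => ∑' n, bb c n * y^n

lemma summable_aa_norm (y : ℝ) : Summable (fun n => ‖aa c n * y^n‖) := by
  refine Summable.of_nonneg_of_le (fun n => norm_nonneg _) (fun n => ?_)
    (Real.summable_pow_div_factorial |y|)
  rw [norm_mul, norm_pow, Real.norm_eq_abs, Real.norm_eq_abs, abs_of_pos (aa_pos hc n)]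
  calc aa c n * |y|^n ≤ (1/n.factorial) * |y|^n := by
        have := aa_le hc n
        have h0 : (0:ℝ) ≤ |y|^n := by positivity
        nlinarith
    _ = |y|^n / n.factorial := by ring

lemma summable_bb_norm (y : ℝ) : Summable (fun n => ‖bb c n * y^n‖) := by
  refine Summable.of_nonneg_of_le (fun n => norm_nonneg _) (fun n => ?_)
    (Real.summable_pow_div_factorial |y|)
  rw [norm_mul, norm_pow, Real.norm_eq_abs, Real.norm_eq_abs, abs_of_pos (bb_pos hc n)]
  calc bb c n * |y|^n ≤ (1/n.factorial) * |y|^n := by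
        have := bb_le hc n
        have h0 : (0:ℝ) ≤ |y|^n := by positivity
        nlinarith
    _ = |y|^n / n.factorial := by ring

lemma summable_aa (y : ℝ) : Summable (fun n => aa c n * y^n) :=
  (summable_aa_norm hc y).of_norm

lemma summable_bb (y : ℝ) : Summable (fun n => bb c n * y^n) :=
  (summable_bb_norm hc y).of_norm

lemma hasDerivAt_Fg (y : ℝ) : HasDerivAt (Fg c) (Gg c y) y := by
  set R := |y| + 1 with hRdef
  have hR : 0 < R := by have := abs_nonneg y; simp [hRdef]; linarith
  have hyR : |y| < R := by simp [hRdef]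
  set u : ℕ → ℝ := fun n => aa c n * ((n:ℝ) * R^(n-1)) with hu_def
  have hu : Summable u := by
    rw [← summable_nat_add_iff 1]
    apply (summable_bb hc R).congr
    intro n
    have h1 : bb c n = ((n:ℕ)+1 : ℝ) * aa c (n+1) := by
      have := bb_eq_succ_aa hc n; push_cast at this ⊢; linarith
    simp only [hu_def, Nat.add_sub_cancel]
    rw [h1]
    push_cast
    ring
  have hmem : ∀ z : ℝ, |z| < R → z ∈ Set.Ioo (-R) R := by
    intro z hz
    have := abs_lt.1 hz
    exact ⟨this.1, this.2⟩
  have hg' : ∀ (n : ℕ), ∀ z ∈ Set.Ioo (-R) R, ‖aa c n * ((n:ℝ) * z^(n-1))‖ ≤ u n := by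
    intro n z hz
    have hzR : |z| ≤ R := by
      rcases hz with ⟨h1, h2⟩
      rw [abs_le]; constructor <;> linarith
    rw [norm_mul, norm_mul, norm_pow, Real.norm_eq_abs, Real.norm_eq_abs, Real.norm_eq_abs,
      abs_of_pos (aa_pos hc n), Nat.abs_cast]
    simp only [hu_def]
    have h1 : |z|^(n-1) ≤ R^(n-1) := pow_le_pow_left₀ (abs_nonneg z) hzR _
    have h2 : (0:ℝ) ≤ aa c n := (aa_pos hc n).le
    have h3 : (0:ℝ) ≤ (n:ℝ) := Nat.cast_nonneg n
    exact mul_le_mul_of_nonneg_left (mul_le_mul_of_nonneg_left h1 h3) h2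
  have hD := hasDerivAt_tsum_of_isPreconnected hu isOpen_Ioo
    (convex_Ioo (-R) R).isPreconnected
    (g := fun (n:ℕ) (z:ℝ) => aa c n * z^n)
    (g' := fun (n:ℕ) (z:ℝ) => aa c n * ((n:ℝ) * z^(n-1)))
    (fun n z _ => (hasDerivAt_pow n z).const_mul _)
    hg'
    (hmem 0 (by rw [abs_zero]; linarith))
    (summable_aa hc 0)
    (hmem y hyR)
  have hsum : Summable (fun n => aa c n * ((n:ℝ) * y^(n-1))) :=
    hu.of_norm_bounded (fun n => hg' n y (hmem y hyR))
  have heq : ∑' n, aa c n * ((n:ℝ) * y^(n-1)) = Gg c y := by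
    rw [Summable.tsum_eq_zero_add hsum]
    simp only [Nat.cast_zero, zero_mul, mul_zero, zero_add]
    unfold Gg
    apply tsum_congr
    intro n
    have h1 : bb c n = ((n:ℕ)+1 : ℝ) * aa c (n+1) := by
      have := bb_eq_succ_aa hc n; push_cast at this ⊢; linarith
    simp only [Nat.add_sub_cancel]
    rw [h1]
    push_cast
    ring
  rw [← heq]
  exact hD

omit hc in
lemma Fg_zero : Fg c 0 = 1 := by
  unfold Fg
  rw [tsum_eq_single 0]
  · norm_num [aa, rise_zero]
  · intro n hn
    rw [zero_pow hn, mul_zero]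

lemma one_le_Fg {y : ℝ} (hy : 0 ≤ y) : 1 ≤ Fg c y := by
  have h0 : aa c 0 * y^0 = 1 := by norm_num [aa, rise_zero]
  calc (1:ℝ) = aa c 0 * y^0 := h0.symm
    _ ≤ Fg c y := Summable.le_tsum (summable_aa hc y) 0 (fun j _ => by
        have := (aa_pos hc j).le
        positivity)

lemma Fg_pos {y : ℝ} (hy : 0 ≤ y) : 0 < Fg c y := lt_of_lt_of_le one_pos (one_le_Fg hc hy)

lemma Gg_nonneg {y : ℝ} (hy : 0 ≤ y) : 0 ≤ Gg c y :=
  tsum_nonneg (fun n => by have := (bb_pos hc n).le; positivity)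

lemma L1 {y : ℝ} (hy : 0 ≤ y) : c * Gg c y ≤ Fg c y := by
  unfold Fg Gg
  rw [← tsum_mul_left]
  apply Summable.tsum_le_tsum _ ((summable_bb hc y).mul_left c) (summable_aa hc y)
  intro n
  have h1 : aa c n = (c + n) * bb c n := aa_eq hc n
  have h2 := (bb_pos hc n).le
  have h3 : (0:ℝ) ≤ y^n := by positivity
  have h5 : (0:ℝ) ≤ (n:ℝ) * (bb c n * y^n) := by positivity
  nlinarith


/-! ### coefficient inequality in shifted form -/

lemma keyP' (m : ℕ) :
    (∑ k ∈ range (m+1), bb c k * bb c (m-k))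
      + (c-1) * (∑ k ∈ range (m+2), aa c k * bb c (m+1-k))
      + c * (∑ k ∈ range (m+2), bb c k * bb c (m+1-k))
      ≤ ∑ k ∈ range (m+2), aa c k * aa c (m+1-k) := by
  have hshift : ∑ k ∈ range (m+2), (k:ℝ) * aa c k * bb c (m+1-k)
      = ∑ k ∈ range (m+1), bb c k * bb c (m-k) := by
    rw [Finset.sum_range_succ' (fun k => (k:ℝ) * aa c k * bb c (m+1-k)) (m+1)]
    simp only [Nat.cast_zero, zero_mul, add_zero, Nat.succ_sub_succ_eq_sub]
    apply Finset.sum_congr rfl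
    intro k _
    have h1 : bb c k = ((k:ℕ)+1 : ℝ) * aa c (k+1) := by
      have := bb_eq_succ_aa hc k; push_cast at this ⊢; linarith
    rw [h1]
    push_cast
    ring
  have := keyP hc (m+1)
  rw [hshift] at this
  exact this

/-! ### Cauchy products and the quadratic inequality -/

/-- convolution coefficients -/
noncomputable def cAA (c : ℝ) (n : ℕ) : ℝ := ∑ k ∈ range (n+1), aa c k * aa c (n-k)
noncomputable def cAB (c : ℝ) (n : ℕ) : ℝ := ∑ k ∈ range (n+1), aa c k * bb c (n-k)
noncomputable def cBB (c : ℝ) (n : ℕ) : ℝ := ∑ k ∈ range (n+1), bb c k * bb c (n-k)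

omit hc in
lemma collapse (u v : ℕ → ℝ) (y : ℝ) (n : ℕ) :
    ∑ k ∈ range (n+1), (u k * y^k) * (v (n-k) * y^(n-k))
      = (∑ k ∈ range (n+1), u k * v (n-k)) * y^n := by
  rw [Finset.sum_mul]
  apply Finset.sum_congr rfl
  intro k hk
  have hkn : k ≤ n := by have := Finset.mem_range.1 hk; omega
  have h : y^k * y^(n-k) = y^n := by
    rw [← pow_add]
    congr 1
    omega
  calc (u k * y^k) * (v (n-k) * y^(n-k)) = (u k * v (n-k)) * (y^k * y^(n-k)) := by ring
    _ = u k * v (n-k) * y^n := by rw [h]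

lemma cauchy_AA (y : ℝ) : Fg c y * Fg c y = ∑' n, cAA c n * y^n := by
  unfold Fg
  rw [tsum_mul_tsum_eq_tsum_sum_range_of_summable_norm (summable_aa_norm hc y)
    (summable_aa_norm hc y)]
  exact tsum_congr (fun n => collapse _ _ y n)

lemma cauchy_AB (y : ℝ) : Fg c y * Gg c y = ∑' n, cAB c n * y^n := by
  unfold Fg Gg
  rw [tsum_mul_tsum_eq_tsum_sum_range_of_summable_norm (summable_aa_norm hc y)
    (summable_bb_norm hc y)]
  exact tsum_congr (fun n => collapse _ _ y n)

lemma cauchy_BB (y : ℝ) : Gg c y * Gg c y = ∑' n, cBB c n * y^n := by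
  unfold Gg
  rw [tsum_mul_tsum_eq_tsum_sum_range_of_summable_norm (summable_bb_norm hc y)
    (summable_bb_norm hc y)]
  exact tsum_congr (fun n => collapse _ _ y n)

lemma summable_cAA (y : ℝ) : Summable (fun n => cAA c n * y^n) := by
  apply ((summable_norm_sum_mul_range_of_summable_norm (summable_aa_norm hc y)
    (summable_aa_norm hc y)).of_norm).congr
  intro n
  exact collapse _ _ y n

lemma summable_cAB (y : ℝ) : Summable (fun n => cAB c n * y^n) := by
  apply ((summable_norm_sum_mul_range_of_summable_norm (summable_aa_norm hc y)
    (summable_bb_norm hc y)).of_norm).congr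
  intro n
  exact collapse _ _ y n

lemma summable_cBB (y : ℝ) : Summable (fun n => cBB c n * y^n) := by
  apply ((summable_norm_sum_mul_range_of_summable_norm (summable_bb_norm hc y)
    (summable_bb_norm hc y)).of_norm).congr
  intro n
  exact collapse _ _ y n

/-- shifted series for `y * G^2` -/
noncomputable def Rsh (c : ℝ) (y : ℝ) : ℕ → ℝ
  | 0 => 0
  | (m+1) => cBB c m * y^(m+1)

lemma summable_Rsh (y : ℝ) : Summable (Rsh c y) := by
  rw [← summable_nat_add_iff 1]
  apply ((summable_cBB hc y).mul_left y).congr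
  intro n
  show y * (cBB c n * y^n) = Rsh c y (n+1)
  show y * (cBB c n * y^n) = cBB c n * y^(n+1)
  ring

lemma yGG_eq (y : ℝ) : y * (Gg c y * Gg c y) = ∑' n, Rsh c y n := by
  rw [cauchy_BB hc y, ← tsum_mul_left]
  rw [Summable.tsum_eq_zero_add (summable_Rsh hc y)]
  show _ = 0 + ∑' n, cBB c n * y^(n+1)
  rw [zero_add]
  apply tsum_congr
  intro n
  ring

lemma star {y : ℝ} (hy : 0 ≤ y) :
    (y + c) * (Gg c y)^2 + (c-1) * (Fg c y * Gg c y) ≤ (Fg c y)^2 := by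
  have e1 : (y + c) * (Gg c y)^2 + (c-1) * (Fg c y * Gg c y)
      = y * (Gg c y * Gg c y) + (c * (Gg c y * Gg c y) + (c-1) * (Fg c y * Gg c y)) := by
    ring
  have e2 : (Fg c y)^2 = Fg c y * Fg c y := sq (Fg c y) ▸ rfl
  rw [e1, sq, yGG_eq hc y, cauchy_BB hc y, cauchy_AB hc y, ← tsum_mul_left, ← tsum_mul_left,
    ← Summable.tsum_add ((summable_cBB hc y).mul_left c) ((summable_cAB hc y).mul_left (c-1)),
    ← Summable.tsum_add (summable_Rsh hc y)
      (((summable_cBB hc y).mul_left c).add ((summable_cAB hc y).mul_left (c-1))),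
    cauchy_AA hc y]
  apply Summable.tsum_le_tsum _ ((summable_Rsh hc y).add
    (((summable_cBB hc y).mul_left c).add ((summable_cAB hc y).mul_left (c-1))))
    (summable_cAA hc y)
  intro n
  match n with
  | 0 =>
    show (0:ℝ) + (c * (cBB c 0 * y^0) + (c-1) * (cAB c 0 * y^0)) ≤ cAA c 0 * y^0
    have h := keyP hc 0
    have h0 : ∑ k ∈ range (0+1), (k:ℝ) * aa c k * bb c (0-k) = 0 := by simp
    rw [h0] at h
    unfold cAA cAB cBB
    simp only [pow_zero, mul_one]
    linarith
  | (m+1) =>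
    show cBB c m * y^(m+1) + (c * (cBB c (m+1) * y^(m+1)) + (c-1) * (cAB c (m+1) * y^(m+1)))
      ≤ cAA c (m+1) * y^(m+1)
    have h := keyP' hc m
    have hyp : (0:ℝ) ≤ y^(m+1) := by positivity
    have e3 : cBB c m * y^(m+1) + (c * (cBB c (m+1) * y^(m+1)) + (c-1) * (cAB c (m+1) * y^(m+1)))
        = (cBB c m + (c-1) * cAB c (m+1) + c * cBB c (m+1)) * y^(m+1) := by ring
    rw [e3]
    exact mul_le_mul_of_nonneg_right h hyp

/-- the ratio bound -/
lemma KI {y : ℝ} (hy : 0 ≤ y) :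
    (Real.sqrt (4*y + (c+1)^2) + c - 1) * Gg c y ≤ 2 * Fg c y := by
  set s := Real.sqrt (4*y + (c+1)^2) with hs
  have harg : (0:ℝ) ≤ 4*y + (c+1)^2 := by positivity
  have hs2 : s^2 = 4*y + (c+1)^2 := Real.sq_sqrt harg
  have hs0 : 0 ≤ s := Real.sqrt_nonneg _
  have hF := Fg_pos hc hy
  have hG := Gg_nonneg hc hy
  have hL1 := L1 hc hy
  have hstar := star hc hy
  have hRHS : 0 < 2 * Fg c y - (c-1) * Gg c y := by nlinarith
  have hsq : (s * Gg c y)^2 ≤ (2 * Fg c y - (c-1) * Gg c y)^2 := by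
    have : (s * Gg c y)^2 = (4*y + (c+1)^2) * (Gg c y)^2 := by
      rw [mul_pow, hs2]
    rw [this]
    nlinarith
  have h1 : s * Gg c y ≤ 2 * Fg c y - (c-1) * Gg c y := by
    nlinarith [mul_nonneg hs0 hG]
  linarith


/-! ### Gronwall argument -/

/-- the square-root term -/
noncomputable def sqt (c : ℝ) (y : ℝ) : ℝ := Real.sqrt (4*y + (c+1)^2)
/-- the comparison function -/
noncomputable def Phi (c : ℝ) (y : ℝ) : ℝ :=
  Real.log (Fg c y) - sqt c y - (1-c) * Real.log (sqt c y + (c-1))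
/-- its derivative -/
noncomputable def PhiD (c : ℝ) (y : ℝ) : ℝ :=
  Gg c y / Fg c y - 4/(2*sqt c y) - (1-c) * ((4/(2*sqt c y))/(sqt c y + (c-1)))

lemma arg_pos {y : ℝ} (hy : 0 ≤ y) : 0 < 4*y + (c+1)^2 := by nlinarith

lemma sqt_pos {y : ℝ} (hy : 0 ≤ y) : 0 < sqt c y :=
  Real.sqrt_pos.2 (arg_pos hc hy)

lemma sqt_shift_pos {y : ℝ} (hy : 0 ≤ y) : 0 < sqt c y + (c-1) := by
  have := sqt_pos hc hy
  linarith

lemma hasDerivAt_sqt {y : ℝ} (hy : 0 ≤ y) : HasDerivAt (sqt c) (4 / (2 * sqt c y)) y := by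
  have hinner : HasDerivAt (fun z : ℝ => 4*z + (c+1)^2) 4 y := by
    have h := ((hasDerivAt_id y).const_mul (4:ℝ)).add_const ((c+1)^2)
    simpa using h
  have h2 := hinner.sqrt (ne_of_gt (arg_pos hc hy))
  exact h2

lemma hasDerivAt_Phi {y : ℝ} (hy : 0 ≤ y) : HasDerivAt (Phi c) (PhiD c y) y := by
  have hF := hasDerivAt_Fg hc y
  have hFpos := Fg_pos hc hy
  have hlogF := hF.log (ne_of_gt hFpos)
  have hsq := hasDerivAt_sqt hc hy
  have hlog2 := (hsq.add_const (c-1)).log (ne_of_gt (sqt_shift_pos hc hy))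
  have h := (hlogF.sub hsq).sub (hlog2.const_mul (1-c))
  exact h

lemma PhiD_nonpos {y : ℝ} (hy : 0 ≤ y) : PhiD c y ≤ 0 := by
  have hFpos := Fg_pos hc hy
  have hs := sqt_pos hc hy
  have hsh := sqt_shift_pos hc hy
  have hKI : (sqt c y + c - 1) * Gg c y ≤ 2 * Fg c y := KI hc hy
  have key : Gg c y / Fg c y ≤ 2 / (sqt c y + (c-1)) := by
    rw [div_le_div_iff₀ hFpos hsh]
    nlinarith
  have heq : 4/(2*sqt c y) + (1-c) * ((4/(2*sqt c y))/(sqt c y + (c-1)))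
      = 2/(sqt c y + (c-1)) := by
    field_simp
    ring
  unfold PhiD
  linarith

lemma gron {x : ℝ} (hx : 0 ≤ x) : Phi c x ≤ Phi c 0 := by
  have hanti : AntitoneOn (Phi c) (Set.Icc 0 x) := by
    apply antitoneOn_of_deriv_nonpos (convex_Icc 0 x)
    · intro y hy
      exact (hasDerivAt_Phi hc hy.1).continuousAt.continuousWithinAt
    · intro y hy
      rw [interior_Icc] at hy
      exact (hasDerivAt_Phi hc hy.1.le).differentiableAt.differentiableWithinAt
    · intro y hy
      rw [interior_Icc] at hy
      rw [(hasDerivAt_Phi hc hy.1.le).deriv]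
      exact PhiD_nonpos hc hy.1.le
  exact hanti (Set.left_mem_Icc.2 hx) (Set.right_mem_Icc.2 hx) hx

lemma Phi_zero : Phi c 0 = -(c+1) - (1-c) * Real.log (2*c) := by
  have h1 : sqt c 0 = c + 1 := by
    unfold sqt
    rw [show 4*(0:ℝ) + (c+1)^2 = (c+1)^2 by ring]
    exact Real.sqrt_sq (by linarith)
  unfold Phi
  rw [h1, Fg_zero, Real.log_one]
  ring_nf

lemma main_bound {x : ℝ} (hx : 0 ≤ x) :
    Fg c x ≤ Real.exp (sqt c x - c - 1) *
      ((c - 1) / (2 * c) + (1 / (2 * c)) * sqt c x) ^ (1 - c : ℝ) := by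
  have hs := sqt_pos hc hx
  have hsh := sqt_shift_pos hc hx
  have hFpos := Fg_pos hc hx
  have hc0 : (0:ℝ) < 2*c := by linarith
  set u : ℝ := (c - 1) / (2 * c) + (1 / (2 * c)) * sqt c x with hu_def
  have hu : u = (sqt c x + (c-1)) / (2*c) := by
    rw [hu_def]
    field_simp
    ring
  have hupos : 0 < u := by
    rw [hu]
    positivity
  have hlogu : Real.log u = Real.log (sqt c x + (c-1)) - Real.log (2*c) := by
    rw [hu, Real.log_div (ne_of_gt hsh) (ne_of_gt hc0)]
  have hgron := gron hc hx
  rw [Phi_zero hc] at hgron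
  unfold Phi at hgron
  have hlog : Real.log (Fg c x) ≤ sqt c x - c - 1 + Real.log u * (1-c) := by
    rw [hlogu]
    nlinarith [hgron]
  have hrpow : u ^ (1 - c : ℝ) = Real.exp (Real.log u * (1-c)) :=
    Real.rpow_def_of_pos hupos (1-c)
  rw [hrpow, ← Real.exp_add]
  calc Fg c x = Real.exp (Real.log (Fg c x)) := (Real.exp_log hFpos).symm
    _ ≤ Real.exp (sqt c x - c - 1 + Real.log u * (1-c)) := Real.exp_le_exp.2 hlog


end Stmt10Aux

theorem stmt10 (c x : ℝ) (hc : 1 < c) (hx : 0 ≤ x) :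
    (∑' n : ℕ, x ^ n / (rise c n * (Nat.factorial n)))
      ≤ Real.exp (Real.sqrt (4 * x + (c + 1) ^ 2) - c - 1) *
          ((c - 1) / (2 * c) + (1 / (2 * c)) * Real.sqrt (4 * x + (c + 1) ^ 2)) ^ (1 - c) := by
  have heq : (∑' n : ℕ, x ^ n / (rise c n * (Nat.factorial n))) = Stmt10Aux.Fg c x := by
    simp only [Stmt10Aux.Fg]
    apply tsum_congr
    intro n
    rw [Stmt10Aux.aa]
    ring
  rw [heq]
  have h := Stmt10Aux.main_bound hc hx
  simpa [Stmt10Aux.sqt] using h
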